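/- For all α > 0 and K > 0, ∫_K^∞ (α^α / Γ(α)) · e^{-α/u} / u^{1+α} du ≤ min{ (α^α / Γ(α+1)) K^{-α}, α^{-1/2} (K/e)^{-α} }. -/

import Mathlib

open MeasureTheory

open Real Nat

lemma chordLB {x b : ℝ} (hx : 0 < x) (hxb : x ≤ b) :
    Real.log (Real.Gamma b) - (b - x) * Real.log b ≤ Real.log (Real.Gamma x) := by
  rcases eq_or_lt_of_le hxb with rfl | h
  · simp
  have hb : 0 < b := hx.trans h
  have hD : 0 < b + 1 - x := by linarith
  have key := Real.convexOn_log_Gamma.2 (Set.mem_Ioi.2 hx)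
      (Set.mem_Ioi.2 (by linarith : (0:ℝ) < b + 1))
      (show (0:ℝ) ≤ 1 / (b + 1 - x) by positivity)
      (show (0:ℝ) ≤ (b - x) / (b + 1 - x) by apply div_nonneg <;> linarith)
      (show 1 / (b + 1 - x) + (b - x) / (b + 1 - x) = 1 by field_simp; ring)
  have hcomb : (1 / (b + 1 - x)) • x + ((b - x) / (b + 1 - x)) • (b + 1) = b := by
    simp only [smul_eq_mul]; field_simp; ring
  rw [hcomb] at key
  have hG1 : Real.log (Real.Gamma (b+1)) = Real.log (Real.Gamma b) + Real.log b := by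
    rw [Real.Gamma_add_one hb.ne', Real.log_mul hb.ne' (Real.Gamma_pos_of_pos hb).ne']
    ring
  simp only [Function.comp_apply, hG1, smul_eq_mul] at key
  rw [div_mul_eq_mul_div, div_mul_eq_mul_div, ← add_div, le_div_iff₀ hD] at key
  nlinarith [key]

lemma factLB (n : ℕ) (hn : 0 < n) :
    Real.sqrt π * (Real.sqrt (2 * n) * ((n : ℝ) / Real.exp 1) ^ n) ≤ (n ! : ℝ) := by
  have h1 : Real.sqrt π ≤ Stirling.stirlingSeq n := by
    have ha := Stirling.log_stirlingSeq'_antitone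
    have ht : Filter.Tendsto (Real.log ∘ Stirling.stirlingSeq ∘ Nat.succ) Filter.atTop
        (nhds (Real.log (Real.sqrt π))) := by
      apply Filter.Tendsto.log
      · exact Stirling.tendsto_stirlingSeq_sqrt_pi.comp (Filter.tendsto_add_atTop_nat 1)
      · positivity
    obtain ⟨m, rfl⟩ := Nat.exists_eq_add_of_lt hn
    have hle := ha.le_of_tendsto ht m
    simp only [Function.comp_apply, Nat.succ_eq_add_one] at hle
    have hpos : 0 < Stirling.stirlingSeq (m + 1) := Stirling.stirlingSeq'_pos m
    have hfix : 0 + m + 1 = m + 1 := by omega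
    rw [hfix]
    calc Real.sqrt π = Real.exp (Real.log (Real.sqrt π)) := by
          rw [Real.exp_log]; positivity
      _ ≤ Real.exp (Real.log (Stirling.stirlingSeq (m + 1))) := Real.exp_le_exp.2 hle
      _ = _ := Real.exp_log hpos
  have h2 : 0 < Real.sqrt (2 * n) * ((n : ℝ) / Real.exp 1) ^ n := by
    have : (0:ℝ) < n := by exact_mod_cast hn
    positivity
  rw [Stirling.stirlingSeq, le_div_iff₀ h2] at h1
  linarith

lemma case3alg (x N t u c Lx L1 LG F P : ℝ) (hxt : x = N + t)
    (hch : F - (N + 1 - x) * L1 ≤ LG)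
    (hlogfact : P/2 + c/2 + N*(c-1) ≤ F)
    (hP : 1 ≤ P)
    (p1 : (x - 1/2) * Lx ≤ (x - 1/2)*(c + t*u))
    (p2 : (N + 1 - x) * L1 ≤ (N+1-x)*(c+u))
    (hq : u*(t^2 - (3/2)*t + 1) ≤ 1/2)
    (hNtu : N*(t*u) = t) :
    (x - 1/2) * Lx - x ≤ LG := by
  subst hxt; nlinarith [hch, hlogfact, hP, p1, p2, hq, hNtu]

lemma logGammaLB {x : ℝ} (hx : 0 < x) :
    (x - 1/2) * Real.log x - x ≤ Real.log (Real.Gamma x) := by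
  have hl2 : (0:ℝ) < Real.log 2 := Real.log_pos (by norm_num)
  have hl2' : Real.log 2 < 0.6931472 := by
    have := Real.log_two_lt_d9; linarith
  rcases le_or_gt x 1 with h1 | h1
  · -- 0 < x ≤ 1
    have hch := chordLB (x := x + 1) (b := 2) (by linarith) (by linarith)
    rw [Real.Gamma_two, Real.log_one] at hch
    have hGx : Real.log (Real.Gamma (x + 1)) = Real.log x + Real.log (Real.Gamma x) := by
      rw [Real.Gamma_add_one hx.ne', Real.log_mul hx.ne' (Real.Gamma_pos_of_pos hx).ne']
    rw [hGx] at hch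
    set s := Real.sqrt x with hs
    have hs0 : 0 < s := Real.sqrt_pos.2 hx
    have hs1 : s ≤ 1 := by
      rw [hs, show (1:ℝ) = Real.sqrt 1 by simp]
      exact Real.sqrt_le_sqrt h1
    have hxs : x = s ^ 2 := (Real.sq_sqrt hx.le).symm
    have hlogx : Real.log x = 2 * Real.log s := by
      rw [hxs, Real.log_pow]; push_cast; ring
    have hlogs : Real.log s ≤ s - 1 := Real.log_le_sub_one_of_pos hs0
    have hmul : (x + 1/2) * Real.log x ≤ (2*x + 1) * (s - 1) := by
      rw [hlogx]; nlinarith [hlogs, hx]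
    have hkey : (x + 1/2) * Real.log x - x + (1 - x) * Real.log 2 ≤ 0 := by
      have hcube : s^3 ≤ s^2 := by nlinarith
      nlinarith [hmul, hl2', hl2, sq_nonneg (1.6931472 * s - 1/2), hs0, hs1, hxs]
    linarith [hch, hkey]
  rcases le_or_gt x 2 with h2 | h2
  · -- 1 < x ≤ 2
    have hch := chordLB (x := x) (b := 2) hx h2
    rw [Real.Gamma_two, Real.log_one] at hch
    have hlogx : Real.log x ≤ x - 1 := Real.log_le_sub_one_of_pos hx
    have hmul : (x - 1/2) * Real.log x ≤ (x - 1/2) * (x - 1) :=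
      mul_le_mul_of_nonneg_left hlogx (by linarith)
    nlinarith [hch, hmul, hl2', hl2]
  · -- 2 < x
    obtain ⟨N, hNdef⟩ : ∃ N : ℝ, N = (⌊x⌋₊ : ℝ) := ⟨_, rfl⟩
    have hn2 : 2 ≤ ⌊x⌋₊ := Nat.le_floor (by exact_mod_cast h2.le)
    have hN2 : (2:ℝ) ≤ N := by rw [hNdef]; exact_mod_cast hn2
    have hNx : N ≤ x := by rw [hNdef]; exact Nat.floor_le (by linarith)
    have hxN : x < N + 1 := by rw [hNdef]; exact Nat.lt_floor_add_one x
    have hNpos : (0:ℝ) < N := by linarith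
    have hch := chordLB (x := x) (b := N + 1) hx (by linarith)
    have hGfact : Real.Gamma (N + 1) = ((⌊x⌋₊)! : ℝ) := by
      rw [hNdef]; exact Real.Gamma_nat_eq_factorial _
    rw [hGfact] at hch
    -- factorial log bound
    have hfl := factLB ⌊x⌋₊ (by omega)
    rw [← hNdef] at hfl
    have hfpos : (0:ℝ) < Real.sqrt π * (Real.sqrt (2 * N) * (N / Real.exp 1) ^ ⌊x⌋₊) := by
      positivity
    have hlogfact : (Real.log π + Real.log 2)/2 + Real.log N / 2
        + N * (Real.log N - 1) ≤ Real.log ((⌊x⌋₊)! : ℝ) := by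
      have hlf := Real.log_le_log hfpos hfl
      rw [Real.log_mul (by positivity) (by positivity),
          Real.log_mul (by positivity) (by positivity),
          Real.log_sqrt Real.pi_pos.le,
          Real.log_sqrt (by positivity), Real.log_mul (by norm_num) hNpos.ne',
          Real.log_pow, Real.log_div hNpos.ne' (Real.exp_ne_zero 1), Real.log_exp] at hlf
      have hcast : ((⌊x⌋₊ : ℕ) : ℝ) = N := hNdef.symm
      rw [hcast] at hlf
      linarith [hlf]
    have hP : 1 ≤ Real.log π + Real.log 2 := by
      have hpi : Real.exp 1 ≤ 2 * π := by
        nlinarith [Real.exp_one_lt_d9, Real.pi_gt_three]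
      have h2pi : (1:ℝ) ≤ Real.log (2 * π) := by
        rw [← Real.log_exp 1]
        exact Real.log_le_log (Real.exp_pos 1) hpi
      rw [Real.log_mul (by norm_num) Real.pi_ne_zero] at h2pi
      linarith
    -- slope bounds
    have hLx : Real.log x ≤ Real.log N + (x - N) * (1/N) := by
      have e1 : Real.log x - Real.log N = Real.log (x / N) := (Real.log_div hx.ne' hNpos.ne').symm
      have e2 : Real.log (x / N) ≤ x / N - 1 := Real.log_le_sub_one_of_pos (by positivity)
      have e3 : x / N - 1 = (x - N) * (1/N) := by field_simp
      linarith
    have hL1 : Real.log (N + 1) ≤ Real.log N + 1/N := by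
      have e1 : Real.log (N+1) - Real.log N = Real.log ((N+1) / N) :=
        (Real.log_div (by linarith) hNpos.ne').symm
      have e2 : Real.log ((N+1) / N) ≤ (N+1) / N - 1 := Real.log_le_sub_one_of_pos (by positivity)
      have e3 : (N+1) / N - 1 = 1/N := by field_simp; ring
      linarith
    have p1 : (x - 1/2) * Real.log x ≤ (x - 1/2) * (Real.log N + (x - N) * (1/N)) :=
      mul_le_mul_of_nonneg_left hLx (by linarith)
    have p2 : (N + 1 - x) * Real.log (N + 1) ≤ (N + 1 - x) * (Real.log N + 1/N) :=
      mul_le_mul_of_nonneg_left hL1 (by linarith)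
    have ht0 : 0 ≤ x - N := by linarith
    have ht1 : x - N ≤ 1 := by linarith
    have hu0 : (0:ℝ) < 1/N := by positivity
    have hu2 : 1/N ≤ 1/2 := by rw [div_le_div_iff₀ hNpos (by norm_num)]; linarith
    have hq : (1/N) * ((x-N)^2 - (3/2)*(x-N) + 1) ≤ 1/2 := by
      nlinarith [mul_nonneg hu0.le (mul_nonneg ht0 (sub_nonneg.2 ht1)),
        mul_nonneg hu0.le ht0]
    have hNtu : N * ((x - N) * (1/N)) = x - N := by field_simp
    exact case3alg x N (x - N) (1/N) (Real.log N) (Real.log x) (Real.log (N+1))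
      (Real.log (Real.Gamma x)) (Real.log ((⌊x⌋₊)! : ℝ)) (Real.log π + Real.log 2)
      (by ring) hch hlogfact hP p1 p2 hq hNtu

lemma stirlingLB {x : ℝ} (hx : 0 < x) :
    x ^ (x - 1/2 : ℝ) * Real.exp (-x) ≤ Real.Gamma x := by
  have h := logGammaLB hx
  calc x ^ (x - 1/2 : ℝ) * Real.exp (-x)
      = Real.exp ((x - 1/2) * Real.log x - x) := by
        rw [Real.rpow_def_of_pos hx, ← Real.exp_add]
        ring_nf
    _ ≤ Real.exp (Real.log (Real.Gamma x)) := Real.exp_le_exp.2 h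
    _ = Real.Gamma x := Real.exp_log (Real.Gamma_pos_of_pos hx)

theorem stmt_10 (α K : ℝ) (hα : 0 < α) (hK : 0 < K) :
    (∫ u in Set.Ioi K, (α ^ α / Real.Gamma α) * Real.exp (-α / u) / u ^ (1 + α))
      ≤ min ((α ^ α / Real.Gamma (α + 1)) * K ^ (-α))
          (α ^ (-(1/2) : ℝ) * (K / Real.exp 1) ^ (-α)) := by
  have hΓ : 0 < Real.Gamma α := Real.Gamma_pos_of_pos hα
  have hC : 0 < α ^ α / Real.Gamma α := by positivity
  set C := α ^ α / Real.Gamma α with hCdef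
  have hexp : (-1 - α) < -1 := by linarith
  have hintg : IntegrableOn (fun u : ℝ => C * u ^ (-1 - α : ℝ)) (Set.Ioi K) :=
    (integrableOn_Ioi_rpow_of_lt hexp hK).const_mul C
  -- pointwise bound and integral comparison
  have hbound : (∫ u in Set.Ioi K, C * Real.exp (-α / u) / u ^ (1 + α))
      ≤ ∫ u in Set.Ioi K, C * u ^ (-1 - α : ℝ) := by
    apply integral_mono_of_nonneg
    · filter_upwards [ae_restrict_mem measurableSet_Ioi] with u hu
      have hu0 : 0 < u := hK.trans hu
      positivity
    · exact hintg
    · filter_upwards [ae_restrict_mem measurableSet_Ioi] with u hu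
      have hu0 : 0 < u := hK.trans hu
      have hup : 0 < u ^ (1 + α : ℝ) := Real.rpow_pos_of_pos hu0 _
      have h1 : Real.exp (-α / u) ≤ 1 := by
        rw [← Real.exp_zero]
        apply Real.exp_le_exp.2
        rw [neg_div]
        have : 0 < α / u := by positivity
        linarith
      have h2 : C * Real.exp (-α / u) ≤ C := by nlinarith [h1, hC]
      calc C * Real.exp (-α / u) / u ^ (1 + α : ℝ) ≤ C / u ^ (1 + α : ℝ) := by
            exact div_le_div_of_nonneg_right h2 hup.le
        _ = C * u ^ (-1 - α : ℝ) := by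
            rw [show (-1 - α : ℝ) = -(1 + α) by ring, Real.rpow_neg hu0.le, div_eq_mul_inv]
  -- evaluate the comparison integral
  have hval : (∫ u in Set.Ioi K, C * u ^ (-1 - α : ℝ)) = C * (K ^ (-α : ℝ) / α) := by
    rw [integral_const_mul, integral_Ioi_rpow_of_lt hexp hK,
      show (-1 - α + 1 : ℝ) = -α by ring]
    rw [show -K ^ (-α : ℝ) / (-α) = K ^ (-α : ℝ) / α from neg_div_neg_eq _ _]
  have hB1 : C * (K ^ (-α : ℝ) / α) = (α ^ α / Real.Gamma (α + 1)) * K ^ (-α) := by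
    rw [hCdef, Real.Gamma_add_one hα.ne']
    field_simp
  -- second component
  have hs := stirlingLB hα
  have key : α ^ (α : ℝ) ≤ α ^ (-(1/2) : ℝ) * Real.exp α * (α * Real.Gamma α) := by
    have hmono := mul_le_mul_of_nonneg_left hs
      (show (0:ℝ) ≤ α ^ (-(1/2):ℝ) * Real.exp α * α by positivity)
    have e1 : α ^ (-(1/2):ℝ) * Real.exp α * α * (α ^ (α - 1/2 : ℝ) * Real.exp (-α))
        = α ^ (α : ℝ) := by
      have eα : Real.exp α * Real.exp (-α) = 1 := by rw [← Real.exp_add]; simp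
      have eρ : α ^ (-(1/2):ℝ) * α ^ (α - 1/2 : ℝ) * α = α ^ (α : ℝ) := by
        rw [← Real.rpow_add hα, show (-(1/2) + (α - 1/2) : ℝ) = α - 1 by ring,
          ← Real.rpow_add_one hα.ne', show (α - 1 + 1 : ℝ) = α by ring]
      linear_combination (α ^ (-(1/2):ℝ) * α ^ (α - 1/2 : ℝ) * α) * eα + eρ
    calc α ^ (α : ℝ) = α ^ (-(1/2):ℝ) * Real.exp α * α * (α ^ (α - 1/2 : ℝ) * Real.exp (-α)) :=
          e1.symm
      _ ≤ α ^ (-(1/2):ℝ) * Real.exp α * α * Real.Gamma α := hmono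
      _ = α ^ (-(1/2):ℝ) * Real.exp α * (α * Real.Gamma α) := by ring
  have hcore : α ^ α / Real.Gamma (α + 1) ≤ α ^ (-(1/2) : ℝ) * Real.exp α := by
    rw [Real.Gamma_add_one hα.ne', div_le_iff₀ (by positivity)]
    linarith [key]
  have hKe : (K / Real.exp 1) ^ (-α : ℝ) = K ^ (-α : ℝ) * Real.exp α := by
    rw [Real.div_rpow hK.le (Real.exp_pos 1).le, Real.exp_one_rpow, Real.exp_neg, div_inv_eq_mul]
  have hsecond : (α ^ α / Real.Gamma (α + 1)) * K ^ (-α)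
      ≤ α ^ (-(1/2) : ℝ) * (K / Real.exp 1) ^ (-α) := by
    rw [hKe, show α ^ (-(1/2):ℝ) * (K ^ (-α:ℝ) * Real.exp α)
      = α ^ (-(1/2):ℝ) * Real.exp α * K ^ (-α:ℝ) by ring]
    exact mul_le_mul_of_nonneg_right hcore (Real.rpow_nonneg hK.le _)
  refine le_min ?_ ?_
  · calc _ ≤ _ := hbound
      _ = _ := hval.trans hB1
  · calc _ ≤ _ := hbound
      _ = _ := hval.trans hB1
      _ ≤ _ := hsecond
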